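/- arXiv:2207.12132 — 4 statements merged into one kernel-verified Lean document; each statement's English description precedes it below -/
import Mathlib

section
/- Let Φ : ℝ^{n_x} → ℝ^{n_f} be continuously differentiable with Jacobian ∂Φ/∂x, let f_c : ℝ^{n_x} → ℝ^{n_x} be continuous, let g_c : ℝ^{n_x} × ℝ^{n_u} → ℝ^{n_x} be continuous, continuously differentiable in u, with g_c(x,0) = 0, and let 𝕌 ⊆ ℝ^{n_u} be convex with 0 ∈ 𝕌. Suppose there is A ∈ ℝ^{n_f × n_f} with (∂Φ/∂x)(x) f_c(x) = A Φ(x) for all x. If x : ℝ → ℝ^{n_x} is differentiable, satisfies ẋ(t) = f_c(x(t)) + g_c(x(t), u(t)), and u(t) ∈ 𝕌 for all t, then d/dt Φ(x(t)) = A Φ(x(t)) + B(x(t), u(t))·u(t), where B(x,u) = ∫₀¹ (∂𝓑/∂u)(x, λu) dλ with 𝓑(x,u) = (∂Φ/∂x)(x) g_c(x,u). -/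
open Matrix

/-- Exact factorized (LPV) Koopman form of a continuous-time
nonlinear system: along trajectories of `ẋ = f_c(x) + g_c(x,u)` with `u(t) ∈ 𝕌`
(convex, `0 ∈ 𝕌`), `g_c(x,0) = 0`, `g_c` continuously differentiable in `u`
(partial Jacobian `Dg`), and Koopman-invariant observables `Φ`, we have
`d/dt Φ(x(t)) = A Φ(x(t)) + B(x(t),u(t)) u(t)` where
`B(x,u) = ∫₀¹ (∂𝓑/∂u)(x, λu) dλ` and `(∂𝓑/∂u)(x,u) = (∂Φ/∂x)(x) · (∂g_c/∂u)(x,u)`. -/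
theorem koopman_ct_general_factorized
    {nx nf nu : ℕ}
    (U : Set (Fin nu → ℝ)) (hU : Convex ℝ U) (hU0 : (0 : Fin nu → ℝ) ∈ U)
    (Φ : (Fin nx → ℝ) → (Fin nf → ℝ))
    (DΦ : (Fin nx → ℝ) → Matrix (Fin nf) (Fin nx) ℝ)
    (hΦ : ∀ x : Fin nx → ℝ,
      HasFDerivAt Φ (LinearMap.toContinuousLinearMap (DΦ x).mulVecLin) x)
    (hDΦ : Continuous DΦ)
    (fc : (Fin nx → ℝ) → (Fin nx → ℝ)) (hfc : Continuous fc)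
    (gc : (Fin nx → ℝ) → (Fin nu → ℝ) → (Fin nx → ℝ))
    (hgc : Continuous fun p : (Fin nx → ℝ) × (Fin nu → ℝ) => gc p.1 p.2)
    (Dg : (Fin nx → ℝ) → (Fin nu → ℝ) → Matrix (Fin nx) (Fin nu) ℝ)
    (hg : ∀ (x : Fin nx → ℝ) (u : Fin nu → ℝ),
      HasFDerivAt (fun v => gc x v) (LinearMap.toContinuousLinearMap (Dg x u).mulVecLin) u)
    (hDg : ∀ x : Fin nx → ℝ, Continuous (Dg x))
    (hg0 : ∀ x : Fin nx → ℝ, gc x 0 = 0)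
    (A : Matrix (Fin nf) (Fin nf) ℝ)
    (hA : ∀ x : Fin nx → ℝ, (DΦ x).mulVec (fc x) = A.mulVec (Φ x))
    (u : ℝ → (Fin nu → ℝ)) (hu : ∀ t : ℝ, u t ∈ U)
    (x : ℝ → (Fin nx → ℝ))
    (hx : ∀ t : ℝ, HasDerivAt x (fc (x t) + gc (x t) (u t)) t) :
    ∀ t : ℝ, HasDerivAt (fun τ => Φ (x τ))
      (A.mulVec (Φ (x t)) +
        (Matrix.of fun i j =>
          ∫ s in (0:ℝ)..1, (DΦ (x t) * Dg (x t) (s • u t)) i j).mulVec (u t)) t := by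

  intro t
  set y := x t with hy
  set v := u t with hv
  have hcontDg : Continuous fun s : ℝ => Dg y (s • v) :=
    (hDg y).comp (by continuity)
  have hcontmv : Continuous fun s : ℝ => (Dg y (s • v)).mulVec v := by
    apply continuous_pi
    intro k
    unfold Matrix.mulVec dotProduct
    apply continuous_finset_sum
    intro j _
    exact (((continuous_apply j).comp (continuous_apply k)).comp hcontDg).mul continuous_const
  have hint : IntervalIntegrable (fun s : ℝ => (Dg y (s • v)).mulVec v)
      MeasureTheory.volume 0 1 := hcontmv.intervalIntegrable 0 1
  have hintk : ∀ k, IntervalIntegrable (fun s : ℝ => ((Dg y (s • v)).mulVec v) k)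
      MeasureTheory.volume 0 1 := fun k =>
    ((continuous_apply k).comp hcontmv).intervalIntegrable 0 1
  -- FTC along the segment
  have hline : gc y v = ∫ s in (0:ℝ)..1, (Dg y (s • v)).mulVec v := by
    have hderiv : ∀ s ∈ Set.uIcc (0:ℝ) 1,
        HasDerivAt (fun s : ℝ => gc y (s • v)) ((Dg y (s • v)).mulVec v) s := by
      intro s _
      have h1 : HasDerivAt (fun s : ℝ => s • v) v s := by
        simpa using (hasDerivAt_id s).smul_const v
      have := (hg y (s • v)).comp_hasDerivAt s h1
      simpa [Matrix.mulVecLin_apply, Function.comp_def] using this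
    rw [intervalIntegral.integral_eq_sub_of_hasDerivAt hderiv hint]
    simp [hg0 y]
  -- chain rule
  have h1 : HasDerivAt (fun τ => Φ (x τ)) ((DΦ y).mulVec (fc y + gc y v)) t := by
    have := (hΦ (x t)).comp_hasDerivAt t (hx t)
    simpa [Matrix.mulVecLin_apply, Function.comp_def] using this
  convert h1 using 1
  rw [Matrix.mulVec_add, hA y]
  congr 1
  rw [hline]
  funext i
  have hcomp : ∀ k, (∫ s in (0:ℝ)..1, (Dg y (s • v)).mulVec v) k
      = ∫ s in (0:ℝ)..1, ((Dg y (s • v)).mulVec v) k := fun k =>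
    ((ContinuousLinearMap.proj k : ((Fin nx → ℝ) →L[ℝ] ℝ)).intervalIntegral_comp_comm hint).symm
  have hcontMij : ∀ i j, Continuous fun s : ℝ => (DΦ y * Dg y (s • v)) i j := by
    intro i j
    show Continuous fun s : ℝ => ∑ k, DΦ y i k * Dg y (s • v) k j
    apply continuous_finset_sum
    intro k _
    exact continuous_const.mul ((continuous_apply j).comp ((continuous_apply k).comp hcontDg))
  -- LHS
  have hL : ((Matrix.of fun i j => ∫ s in (0:ℝ)..1, (DΦ y * Dg y (s • v)) i j).mulVec v) i
      = ∫ s in (0:ℝ)..1, ((DΦ y * Dg y (s • v)).mulVec v) i := by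
    show (∑ j, (∫ s in (0:ℝ)..1, (DΦ y * Dg y (s • v)) i j) * v j)
      = ∫ s in (0:ℝ)..1, ∑ j, (DΦ y * Dg y (s • v)) i j * v j
    rw [intervalIntegral.integral_finset_sum
      (f := fun j s => (DΦ y * Dg y (s • v)) i j * v j)
      (fun j _ => ((hcontMij i j).mul continuous_const).intervalIntegrable 0 1)]
    refine Finset.sum_congr rfl fun j _ => ?_
    rw [intervalIntegral.integral_mul_const]
  rw [hL]
  symm
  -- RHS
  show ∑ k, DΦ y i k * (∫ s in (0:ℝ)..1, (Dg y (s • v)).mulVec v) k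
    = ∫ s in (0:ℝ)..1, ((DΦ y * Dg y (s • v)).mulVec v) i
  have hmm : ∀ s : ℝ, ((DΦ y * Dg y (s • v)).mulVec v) i
      = ∑ k, DΦ y i k * ((Dg y (s • v)).mulVec v) k := by
    intro s
    rw [← Matrix.mulVec_mulVec]
    rfl
  have hswap : (∫ s in (0:ℝ)..1, ∑ k, DΦ y i k * ((Dg y (s • v)).mulVec v) k)
      = ∑ k, ∫ s in (0:ℝ)..1, DΦ y i k * ((Dg y (s • v)).mulVec v) k := by
    apply intervalIntegral.integral_finset_sum
    intro k _
    exact (continuous_const.mul ((continuous_apply k).comp hcontmv)).intervalIntegrable 0 1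
  simp only [hmm, hcomp, hswap]
  refine Finset.sum_congr rfl fun k _ => ?_
  rw [intervalIntegral.integral_const_mul]
end

section
/- Let 𝕏 ⊆ ℝ^{n_x} be a convex set, let Φ : ℝ^{n_x} → ℝ^{n_f} be continuously differentiable with Jacobian ∂Φ/∂x, let f : ℝ^{n_x} → ℝ^{n_x} and g : ℝ^{n_x} × ℝ^{n_u} → ℝ^{n_x} be such that f(x) ∈ 𝕏 and f(x) + g(x,u) ∈ 𝕏 for all x ∈ 𝕏, u ∈ 𝕌, and suppose there is A ∈ ℝ^{n_f × n_f} with Φ(f(x)) = A Φ(x) for all x ∈ 𝕏. Then for every x ∈ 𝕏 and u ∈ 𝕌, Φ(f(x) + g(x,u)) = A Φ(x) + 𝓑(x,u), where 𝓑(x,u) = (∫₀¹ (∂Φ/∂x)(f(x) + λ g(x,u)) dλ)·g(x,u); i.e., the discrete-time system x_{k+1} = f(x_k) + g(x_k,u_k) admits the exact finite-dimensional lifted form Φ(x_{k+1}) = A Φ(x_k) + 𝓑(x_k,u_k). -/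
open Matrix

/-- Exact finite-dimensional lifted form of a discrete-time
nonlinear system `x_{k+1} = f(x_k) + g(x_k,u_k)` on a convex forward-invariant
set `𝕏`, with Koopman-invariant observables `Φ(f(x)) = A Φ(x)`:
`Φ(f(x) + g(x,u)) = A Φ(x) + 𝓑(x,u)` where
`𝓑(x,u) = (∫₀¹ (∂Φ/∂x)(f(x) + λ g(x,u)) dλ) g(x,u)`. -/
theorem koopman_dt_general
    {nx nf nu : ℕ}
    (X : Set (Fin nx → ℝ)) (hX : Convex ℝ X)
    (U : Set (Fin nu → ℝ))
    (Φ : (Fin nx → ℝ) → (Fin nf → ℝ))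
    (DΦ : (Fin nx → ℝ) → Matrix (Fin nf) (Fin nx) ℝ)
    (hΦ : ∀ x : Fin nx → ℝ,
      HasFDerivAt Φ (LinearMap.toContinuousLinearMap (DΦ x).mulVecLin) x)
    (hDΦ : Continuous DΦ)
    (f : (Fin nx → ℝ) → (Fin nx → ℝ))
    (g : (Fin nx → ℝ) → (Fin nu → ℝ) → (Fin nx → ℝ))
    (hf : ∀ x ∈ X, f x ∈ X)
    (hfg : ∀ x ∈ X, ∀ u ∈ U, f x + g x u ∈ X)
    (A : Matrix (Fin nf) (Fin nf) ℝ)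
    (hA : ∀ x ∈ X, Φ (f x) = A.mulVec (Φ x)) :
    ∀ x ∈ X, ∀ u ∈ U,
      Φ (f x + g x u) =
        A.mulVec (Φ x) +
          (Matrix.of fun i j =>
            ∫ s in (0:ℝ)..1, DΦ (f x + s • g x u) i j).mulVec (g x u) := by
  intro x hx u hu
  set a := f x with ha
  set v := g x u with hv
  -- vector-valued path derivative
  have hpath : ∀ s : ℝ, HasDerivAt (fun t : ℝ => Φ (a + t • v))
      ((DΦ (a + s • v)).mulVec v) s := by
    intro s
    have h1 : HasDerivAt (fun t : ℝ => a + t • v) v s := by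
      simpa using ((hasDerivAt_id s).smul_const v).const_add a
    have h2 := (hΦ (a + s • v)).comp_hasDerivAt s h1
    simp at h2; exact h2
  have hcont : Continuous fun s : ℝ => (DΦ (a + s • v)).mulVec v := by
    have hc : Continuous fun s : ℝ => DΦ (a + s • v) :=
      hDΦ.comp (by continuity)
    exact (continuous_pi fun i => by
      simp only [Matrix.mulVec, dotProduct]
      exact continuous_finset_sum _ fun j _ =>
        ((continuous_apply j).comp ((continuous_apply i).comp hc)).mul continuous_const)
  funext i
  have hderiv : ∀ s ∈ Set.uIcc (0:ℝ) 1,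
      HasDerivAt (fun t : ℝ => Φ (a + t • v) i)
        (((DΦ (a + s • v)).mulVec v) i) s := by
    intro s _
    exact ((ContinuousLinearMap.proj (R := ℝ) (φ := fun _ : Fin nf => ℝ)
      i).hasFDerivAt.comp_hasDerivAt s (hpath s))
  have hint : IntervalIntegrable (fun s : ℝ => ((DΦ (a + s • v)).mulVec v) i)
      MeasureTheory.volume 0 1 :=
    ((continuous_apply i).comp hcont).intervalIntegrable 0 1
  have hftc := intervalIntegral.integral_eq_sub_of_hasDerivAt hderiv hint
  have hzero : Φ (a + (0:ℝ) • v) i = Φ a i := by norm_num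
  have hone : Φ (a + (1:ℝ) • v) i = Φ (a + v) i := by norm_num
  -- compute the integral as a sum of entrywise integrals times v j
  have hsum : (∫ s in (0:ℝ)..1, ((DΦ (a + s • v)).mulVec v) i)
      = ∑ j, (∫ s in (0:ℝ)..1, DΦ (a + s • v) i j) * v j := by
    have : (fun s : ℝ => ((DΦ (a + s • v)).mulVec v) i)
        = fun s => ∑ j, DΦ (a + s • v) i j * v j := by
      funext s; simp [Matrix.mulVec, dotProduct]
    rw [this, intervalIntegral.integral_finset_sum]
    · exact Finset.sum_congr rfl fun j _ => by
        rw [intervalIntegral.integral_mul_const]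
    · intro j _
      exact (((((continuous_apply j).comp ((continuous_apply i).comp
        (hDΦ.comp (show Continuous fun s : ℝ => a + s • v by continuity)))).mul
        continuous_const)).intervalIntegrable 0 1)
  have key : Φ (a + v) i = Φ a i + ∑ j, (∫ s in (0:ℝ)..1, DΦ (a + s • v) i j) * v j := by
    rw [← hsum]; rw [hzero, hone] at hftc; linarith
  have hAx : Φ a i = (A.mulVec (Φ x)) i := by rw [ha, hA x hx]
  simp only [Pi.add_apply, key, hAx, Matrix.mulVec, dotProduct, Matrix.of_apply]
end

section
/- Let 𝕏 ⊆ ℝ^{n_x} be a convex set, let Φ : ℝ^{n_x} → ℝ^{n_f} be continuously differentiable with Jacobian ∂Φ/∂x, let f : ℝ^{n_x} → ℝ^{n_x} and g : ℝ^{n_x} → ℝ^{n_x × n_u} be such that f(x) ∈ 𝕏 and f(x) + g(x)u ∈ 𝕏 for all x ∈ 𝕏, u ∈ 𝕌, and suppose there is A ∈ ℝ^{n_f × n_f} with Φ(f(x)) = A Φ(x) for all x ∈ 𝕏. Then for every x ∈ 𝕏 and u ∈ 𝕌, the discrete-time control-affine system x_{k+1} = f(x_k) + g(x_k)u_k has the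 exact factorized lifted form Φ(f(x) + g(x)u) = A Φ(x) + B(x,u)·u, where B(x,u) = (∫₀¹ (∂Φ/∂x)(f(x) + λ g(x)u) dλ)·g(x); in particular, unlike the continuous-time control-affine case, the input matrix B also depends on the input u. -/
open Matrix

/-- Exact factorized lifted form of a discrete-time control-affine
system `x_{k+1} = f(x_k) + g(x_k) u_k` on a convex forward-invariant set `𝕏`
with Koopman-invariant observables: `Φ(f(x) + g(x)u) = A Φ(x) + B(x,u) u` where
`B(x,u) = (∫₀¹ (∂Φ/∂x)(f(x) + λ g(x)u) dλ) g(x)`; in the discrete-time case the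
input matrix `B` also depends on the input `u`. -/
theorem koopman_dt_control_affine
    {nx nf nu : ℕ}
    (X : Set (Fin nx → ℝ)) (hX : Convex ℝ X)
    (U : Set (Fin nu → ℝ))
    (Φ : (Fin nx → ℝ) → (Fin nf → ℝ))
    (DΦ : (Fin nx → ℝ) → Matrix (Fin nf) (Fin nx) ℝ)
    (hΦ : ∀ x : Fin nx → ℝ,
      HasFDerivAt Φ (LinearMap.toContinuousLinearMap (DΦ x).mulVecLin) x)
    (hDΦ : Continuous DΦ)
    (f : (Fin nx → ℝ) → (Fin nx → ℝ))
    (g : (Fin nx → ℝ) → Matrix (Fin nx) (Fin nu) ℝ)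
    (hf : ∀ x ∈ X, f x ∈ X)
    (hfg : ∀ x ∈ X, ∀ u ∈ U, f x + (g x).mulVec u ∈ X)
    (A : Matrix (Fin nf) (Fin nf) ℝ)
    (hA : ∀ x ∈ X, Φ (f x) = A.mulVec (Φ x)) :
    ∀ x ∈ X, ∀ u ∈ U,
      Φ (f x + (g x).mulVec u) =
        A.mulVec (Φ x) +
          ((Matrix.of fun i j =>
            ∫ s in (0:ℝ)..1, DΦ (f x + s • (g x).mulVec u) i j) * g x).mulVec u := by
  intro x hx u hu
  set v : Fin nx → ℝ := (g x).mulVec u with hv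
  -- the derivative of s ↦ Φ (f x + s • v)
  have hline : ∀ s : ℝ, HasDerivAt (fun t : ℝ => f x + t • v) v s := by
    intro s
    simpa using ((hasDerivAt_id s).smul_const v).const_add (f x)
  have hcomp : ∀ s : ℝ,
      HasDerivAt (fun t : ℝ => Φ (f x + t • v)) ((DΦ (f x + s • v)).mulVec v) s := by
    intro s
    have := (hΦ (f x + s • v)).comp_hasDerivAt s (hline s)
    exact this
  have hcomp_i : ∀ (i : Fin nf) (s : ℝ),
      HasDerivAt (fun t : ℝ => Φ (f x + t • v) i) ((DΦ (f x + s • v)).mulVec v i) s := by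
    intro i s
    exact (hasDerivAt_pi.1 (hcomp s)) i
  -- continuity / integrability
  have hcont : ∀ (i : Fin nf) (j : Fin nx),
      Continuous fun s : ℝ => DΦ (f x + s • v) i j := by
    intro i j
    have h1 : Continuous fun s : ℝ => f x + s • v := by continuity
    exact (((continuous_apply j).comp (continuous_apply i)).comp hDΦ).comp h1
  have hint : ∀ i : Fin nf,
      IntervalIntegrable (fun s : ℝ => (DΦ (f x + s • v)).mulVec v i)
        MeasureTheory.volume 0 1 := by
    intro i
    apply Continuous.intervalIntegrable
    have : Continuous fun s : ℝ => ∑ j, DΦ (f x + s • v) i j * v j := by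
      apply continuous_finset_sum
      intro j _
      exact (hcont i j).mul continuous_const
    simpa [Matrix.mulVec, dotProduct] using this
  -- FTC componentwise
  have key : ∀ i : Fin nf,
      Φ (f x + v) i - Φ (f x) i
        = ∫ s in (0:ℝ)..1, (DΦ (f x + s • v)).mulVec v i := by
    intro i
    have := intervalIntegral.integral_eq_sub_of_hasDerivAt
      (f := fun t : ℝ => Φ (f x + t • v) i)
      (f' := fun s : ℝ => (DΦ (f x + s • v)).mulVec v i)
      (fun s _ => hcomp_i i s) (hint i)
    simpa using this.symm
  funext i
  have hM : ((Matrix.of fun i j =>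
      ∫ s in (0:ℝ)..1, DΦ (f x + s • v) i j) * g x).mulVec u i
      = ∫ s in (0:ℝ)..1, (DΦ (f x + s • v)).mulVec v i := by
    rw [← Matrix.mulVec_mulVec]
    have : ∀ i, ((Matrix.of fun i j =>
        ∫ s in (0:ℝ)..1, DΦ (f x + s • v) i j)).mulVec v i
        = ∑ j, (∫ s in (0:ℝ)..1, DΦ (f x + s • v) i j) * v j := by
      intro i; simp [Matrix.mulVec, dotProduct]
    rw [this]
    have : (∫ s in (0:ℝ)..1, (DΦ (f x + s • v)).mulVec v i)
        = ∫ s in (0:ℝ)..1, ∑ j, DΦ (f x + s • v) i j * v j := by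
      rfl
    rw [this, intervalIntegral.integral_finset_sum]
    · congr 1; funext j
      rw [intervalIntegral.integral_mul_const]
    · intro j _
      exact ((hcont i j).mul continuous_const).intervalIntegrable _ _
  have := key i
  have hAx := hA x hx
  have : Φ (f x + v) i = Φ (f x) i + ∫ s in (0:ℝ)..1, (DΦ (f x + s • v)).mulVec v i := by
    linarith [key i]
  rw [Pi.add_apply, hM, this, hAx]
end

section
/- Let 𝕏 ⊆ ℝ^{n_x} be a convex set, let Φ : ℝ^{n_x} → ℝ^{n_f} be continuously differentiable with Jacobian ∂Φ/∂x, let f : ℝ^{n_x} → ℝ^{n_x} and b ∈ ℝ^{n_x × n_u} be such that f(x) ∈ 𝕏 and f(x) + bu ∈ 𝕏 for all x ∈ 𝕏, u ∈ 𝕌, and suppose there is A ∈ ℝ^{n_f × n_f} with Φ(f(x)) = A Φ(x) for all x ∈ 𝕏. Then for every x ∈ 𝕏 and u ∈ 𝕌, the discrete-time system with linear input x_{k+1} = f(x_k) + b u_k has the exact factorized lifted form Φ(f(x) + bu) = A Φ(x) + B(x,u)·u, where B(x,u) = (∫₀¹ (∂Φ/∂x)(f(x) + λ b u) dλ)·b.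 -/
open Matrix

/-- Exact factorized lifted form of a discrete-time system with
linear input `x_{k+1} = f(x_k) + b u_k` on a convex forward-invariant set `𝕏`
with Koopman-invariant observables: `Φ(f(x) + bu) = A Φ(x) + B(x,u) u` where
`B(x,u) = (∫₀¹ (∂Φ/∂x)(f(x) + λ b u) dλ) b`. -/
theorem koopman_dt_linear_input
    {nx nf nu : ℕ}
    (X : Set (Fin nx → ℝ)) (hX : Convex ℝ X)
    (U : Set (Fin nu → ℝ))
    (Φ : (Fin nx → ℝ) → (Fin nf → ℝ))
    (DΦ : (Fin nx → ℝ) → Matrix (Fin nf) (Fin nx) ℝ)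
    (hΦ : ∀ x : Fin nx → ℝ,
      HasFDerivAt Φ (LinearMap.toContinuousLinearMap (DΦ x).mulVecLin) x)
    (hDΦ : Continuous DΦ)
    (f : (Fin nx → ℝ) → (Fin nx → ℝ))
    (b : Matrix (Fin nx) (Fin nu) ℝ)
    (hf : ∀ x ∈ X, f x ∈ X)
    (hfb : ∀ x ∈ X, ∀ u ∈ U, f x + b.mulVec u ∈ X)
    (A : Matrix (Fin nf) (Fin nf) ℝ)
    (hA : ∀ x ∈ X, Φ (f x) = A.mulVec (Φ x)) :
    ∀ x ∈ X, ∀ u ∈ U,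
      Φ (f x + b.mulVec u) =
        A.mulVec (Φ x) +
          ((Matrix.of fun i j =>
            ∫ s in (0:ℝ)..1, DΦ (f x + s • b.mulVec u) i j) * b).mulVec u := by
  intro x hx u hu
  set y := f x with hy
  set v := b.mulVec u with hv
  -- the curve s ↦ y + s • v
  have hcurve : ∀ s : ℝ, HasDerivAt (fun t : ℝ => y + t • v) v s := by
    intro s
    simpa using ((hasDerivAt_id s).smul_const v).const_add y
  have hcomp : ∀ s : ℝ, HasDerivAt (fun t : ℝ => Φ (y + t • v))
      ((DΦ (y + s • v)).mulVec v) s := by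
    intro s
    have := (hΦ (y + s • v)).comp_hasDerivAt s (hcurve s)
    simp at this
    exact this
  have hcompi : ∀ (i : Fin nf) (s : ℝ),
      HasDerivAt (fun t : ℝ => Φ (y + t • v) i)
        ((DΦ (y + s • v)).mulVec v i) s := by
    intro i s
    exact (hasDerivAt_pi.mp (hcomp s)) i
  -- continuity of the derivative
  have hcont : ∀ i : Fin nf, Continuous fun s : ℝ => (DΦ (y + s • v)).mulVec v i := by
    intro i
    have h1 : Continuous fun s : ℝ => DΦ (y + s • v) :=
      hDΦ.comp (continuous_const.add (continuous_id.smul continuous_const))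
    have : Continuous fun M : Matrix (Fin nf) (Fin nx) ℝ => M.mulVec v i := by
      simp only [mulVec, dotProduct]
      exact continuous_finset_sum _ fun j _ =>
        Continuous.mul (f := fun M : Matrix (Fin nf) (Fin nx) ℝ => M i j)
          ((continuous_apply j).comp ((continuous_apply i))) continuous_const
    exact this.comp h1
  have hcontij : ∀ (i : Fin nf) (j : Fin nx),
      Continuous fun s : ℝ => DΦ (y + s • v) i j := by
    intro i j
    have h1 : Continuous fun s : ℝ => DΦ (y + s • v) :=
      hDΦ.comp (continuous_const.add (continuous_id.smul continuous_const))
    exact ((continuous_apply j).comp (continuous_apply i)).comp h1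
  -- FTC for each coordinate
  have hftc : ∀ i : Fin nf,
      ∫ s in (0:ℝ)..1, (DΦ (y + s • v)).mulVec v i
        = Φ (y + v) i - Φ y i := by
    intro i
    have := intervalIntegral.integral_eq_sub_of_hasDerivAt
      (f := fun t : ℝ => Φ (y + t • v) i)
      (f' := fun s : ℝ => (DΦ (y + s • v)).mulVec v i)
      (fun s _ => hcompi i s)
      ((hcont i).intervalIntegrable 0 1)
    simpa using this
  funext i
  have hAx : Φ y = A.mulVec (Φ x) := hA x hx
  have hsum : (∫ s in (0:ℝ)..1, (DΦ (y + s • v)).mulVec v i)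
      = ∑ j, (∫ s in (0:ℝ)..1, DΦ (y + s • v) i j) * v j := by
    simp only [mulVec, dotProduct]
    rw [intervalIntegral.integral_finset_sum (f := fun j s => DΦ (y + s • v) i j * v j) (fun j _ =>
      ((hcontij i j).mul continuous_const :
        Continuous fun s : ℝ => DΦ (y + s • v) i j * v j).intervalIntegrable 0 1)]
    simp [intervalIntegral.integral_mul_const]
  have hM : (((Matrix.of fun i j =>
        ∫ s in (0:ℝ)..1, DΦ (y + s • v) i j) * b).mulVec u) i
      = ∑ j, (∫ s in (0:ℝ)..1, DΦ (y + s • v) i j) * v j := by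
    rw [← Matrix.mulVec_mulVec, ← hv]
    simp only [mulVec, dotProduct, Matrix.of_apply]
  simp only [Pi.add_apply]
  rw [hM, ← hsum]
  have h0 : Φ y i = (A.mulVec (Φ x)) i := congrFun hAx i
  linarith [hftc i]
end
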